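/- arXiv:1602.04941 — 2 statements merged into one kernel-verified Lean document; each statement's English description precedes it below -/
import Mathlib

section
/- Let z ∈ ℝ^d be Gaussian with mean (μ^Z − μ)_d and covariance Σ_d^Z, and let A_d be invertible symmetric positive definite d×d matrices. Write S_d = A_d^{-1/2} Σ_d^Z A_d^{-1/2} with eigenvalues α_1^d,…,α_d^d, and m_d = A_d^{-1/2}(μ^Z − μ)_d. If (1/d)‖m_d‖² → L_μ (finite), (1/d)trace(S_d) → L_S (finite), and (1/d)max_i α_i^d → 0, then (1/d)‖A_d^{-1/2}(z − μ)_d‖² → L_μ + L_S in probability as d → ∞. -/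
open Filter MeasureTheory ProbabilityTheory
open scoped NNReal

open MeasureTheory Real Set
open scoped ENNReal

lemma gauss_Ioi_moment {b : ℝ} (hb : 0 < b) {s : ℝ} (hs : 0 < s) :
    ∫ x in Ioi (0:ℝ), x ^ (2*s - 1) * Real.exp (-b * x ^ 2)
      = (1/2) * ((1/b) ^ s * Real.Gamma s) := by
  have h := integral_comp_rpow_Ioi (fun y => (1/2 : ℝ) * (y ^ (s-1) * Real.exp (-(b*y)))) (p := 2) two_ne_zero
  rw [← integral_rpow_mul_exp_neg_mul_Ioi hs hb, ← integral_const_mul, ← h]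
  refine setIntegral_congr_fun measurableSet_Ioi (fun x hx => ?_)
  have hx' : (0:ℝ) < x := hx
  rw [smul_eq_mul, abs_two]
  show x ^ (2*s - 1) * Real.exp (-b * x ^ 2)
      = 2 * x ^ (2 - 1 : ℝ) * ((1/2 : ℝ) * ((x ^ (2:ℝ)) ^ (s-1) * Real.exp (-(b * x ^ (2:ℝ)))))
  have e2 : x ^ (2:ℝ) = x ^ 2 := by rw [rpow_two]
  rw [e2]
  have h3 : ((x^2 : ℝ)) ^ (s - 1) = x ^ (2*(s-1)) := by
    rw [← rpow_two, ← rpow_mul hx'.le]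
  have h4 : x ^ (2 - 1 : ℝ) = x := by norm_num
  have h5 : x * x ^ (2*(s-1)) = x ^ (2*s - 1) := by
    nth_rewrite 1 [← rpow_one x]
    rw [← rpow_add hx']
    ring_nf
  rw [h3, h4, show (-b*x^2) = -(b*x^2) by ring, ← h5]
  ring

lemma gauss_moment_even {b : ℝ} (hb : 0 < b) (n : ℕ) :
    ∫ x : ℝ, x ^ (2*n) * Real.exp (-b * x^2)
      = (1/b) ^ ((2*(n:ℝ)+1)/2) * Real.Gamma ((2*(n:ℝ)+1)/2) := by
  have habs : ∀ x : ℝ, x ^ (2*n) * Real.exp (-b*x^2)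
      = (fun t : ℝ => t ^ (2*n) * Real.exp (-b*t^2)) |x| := by
    intro x
    simp only []
    rw [(even_two_mul n).pow_abs, sq_abs]
  have : ∫ x : ℝ, x ^ (2*n) * Real.exp (-b * x^2)
      = 2 * ∫ x in Ioi (0:ℝ), x ^ (2*n) * Real.exp (-b*x^2) := by
    rw [← integral_comp_abs (f := fun t : ℝ => t ^ (2*n) * Real.exp (-b*t^2))]
    exact integral_congr_ae (Filter.Eventually.of_forall habs)
  rw [this]
  have hs : (0:ℝ) < (2*(n:ℝ)+1)/2 := by positivity
  have key : ∫ x in Ioi (0:ℝ), x ^ (2*n) * Real.exp (-b*x^2)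
      = ∫ x in Ioi (0:ℝ), x ^ (2*((2*(n:ℝ)+1)/2) - 1) * Real.exp (-b*x^2) := by
    refine setIntegral_congr_fun measurableSet_Ioi (fun x hx => ?_)
    rw [show 2*((2*(n:ℝ)+1)/2) - 1 = ((2*n : ℕ) : ℝ) by push_cast; ring, rpow_natCast]
  rw [key, gauss_Ioi_moment hb hs]
  ring

open scoped NNReal

-- integral against gaussianReal as a volume integral
lemma integral_gaussianReal_eq {μ : ℝ} {v : ℝ≥0} (hv : v ≠ 0) (f : ℝ → ℝ) :
    ∫ x, f x ∂(gaussianReal μ v) = ∫ x, gaussianPDFReal μ v x * f x := by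
  rw [gaussianReal_of_var_ne_zero _ hv, gaussianPDF_def]
  have h : ∀ x : ℝ, ENNReal.ofReal (gaussianPDFReal μ v x)
      = ((gaussianPDFReal μ v x).toNNReal : ℝ≥0∞) := fun x => rfl
  simp_rw [h]
  rw [integral_withDensity_eq_integral_smul (measurable_gaussianPDFReal μ v).real_toNNReal f]
  congr 1
  ext x
  rw [NNReal.smul_def, smul_eq_mul, Real.coe_toNNReal _ (gaussianPDFReal_nonneg μ v x)]

lemma integrable_gaussianReal_iff {μ : ℝ} {v : ℝ≥0} (hv : v ≠ 0) {f : ℝ → ℝ}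
    :
    Integrable f (gaussianReal μ v) ↔ Integrable (fun x => gaussianPDFReal μ v x * f x) := by
  rw [gaussianReal_of_var_ne_zero _ hv, gaussianPDF_def]
  have h : ∀ x : ℝ, ENNReal.ofReal (gaussianPDFReal μ v x)
      = ((gaussianPDFReal μ v x).toNNReal : ℝ≥0∞) := fun x => rfl
  simp_rw [h]
  rw [integrable_withDensity_iff_integrable_smul (measurable_gaussianPDFReal μ v).real_toNNReal]
  constructor <;> intro hh <;> refine hh.congr (Filter.Eventually.of_forall fun x => ?_) <;>
    show _ = _ <;>
    simp only [NNReal.smul_def, smul_eq_mul, Real.coe_toNNReal _ (gaussianPDFReal_nonneg μ v x)]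

lemma integrable_pow_mul_exp_neg_mul_sq' {b : ℝ} (hb : 0 < b) (k : ℕ) :
    Integrable fun x : ℝ => x ^ k * Real.exp (-b*x^2) := by
  have h0 : (0:ℝ) ≤ k := Nat.cast_nonneg k
  have h : (-1 : ℝ) < k := by linarith
  simpa [rpow_natCast] using integrable_rpow_mul_exp_neg_mul_sq hb h

lemma pdf_zero_eq {v : ℝ≥0} (x : ℝ) :
    gaussianPDFReal 0 v x = (√(2 * π * v))⁻¹ * Real.exp (-(2*(v:ℝ))⁻¹ * x^2) := by
  rw [gaussianPDFReal]
  congr 1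
  rw [sub_zero]
  congr 1
  field_simp

lemma integrable_pow_gaussian0 {v : ℝ≥0} (hv : v ≠ 0) (k : ℕ) :
    Integrable (fun x => x ^ k) (gaussianReal 0 v) := by
  have hV : (0:ℝ) < v := by positivity
  rw [integrable_gaussianReal_iff hv]
  have hb : (0:ℝ) < (2*(v:ℝ))⁻¹ := by positivity
  simp_rw [pdf_zero_eq, mul_assoc]
  refine Integrable.const_mul ?_ _
  simpa [mul_comm] using integrable_pow_mul_exp_neg_mul_sq' hb k

lemma integral_pow_gaussian0 {v : ℝ≥0} (hv : v ≠ 0) (k : ℕ) :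
    ∫ x, x ^ k ∂(gaussianReal 0 v)
      = (√(2 * π * v))⁻¹ * ∫ x : ℝ, x ^ k * Real.exp (-(2*(v:ℝ))⁻¹ * x^2) := by
  rw [integral_gaussianReal_eq hv]
  simp_rw [pdf_zero_eq, mul_assoc, mul_comm (Real.exp _) _]
  rw [integral_const_mul]

lemma integral_odd_exp {b : ℝ} (n : ℕ) :
    ∫ x : ℝ, x ^ (2*n+1) * Real.exp (-b*x^2) = 0 := by
  have h : ∀ x : ℝ, (-x) ^ (2*n+1) * Real.exp (-b*(-x)^2)
      = -(x ^ (2*n+1) * Real.exp (-b*x^2)) := by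
    intro x
    rw [Odd.neg_pow ⟨n, by ring⟩, neg_sq]
    ring
  have h2 : ∫ x : ℝ, x ^ (2*n+1) * Real.exp (-b*x^2)
      = ∫ x : ℝ, (-x) ^ (2*n+1) * Real.exp (-b*(-x)^2) :=
    (integral_neg_eq_self _ _).symm
  simp_rw [h, integral_neg] at h2
  linarith

lemma gaussian0_moment_one {v : ℝ≥0} (hv : v ≠ 0) :
    ∫ x, x ∂(gaussianReal 0 v) = 0 := by
  have := integral_pow_gaussian0 hv 1
  simp only [pow_one] at this
  rw [this]
  have h1 := integral_odd_exp (b := (2*(v:ℝ))⁻¹) 0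
  simp only [show 2*0+1 = 1 by norm_num, pow_one] at h1
  rw [h1, mul_zero]

lemma gaussian0_moment_three {v : ℝ≥0} (hv : v ≠ 0) :
    ∫ x, x ^ 3 ∂(gaussianReal 0 v) = 0 := by
  rw [integral_pow_gaussian0 hv 3]
  have h3 := integral_odd_exp (b := (2*(v:ℝ))⁻¹) 1
  simp only [show 2*1+1 = 3 by norm_num] at h3
  rw [h3, mul_zero]

lemma sqrt_2piv_pos {v : ℝ≥0} (hv : v ≠ 0) : 0 < √(2 * π * v) := by
  have hV : (0:ℝ) < v := by positivity
  have := pi_pos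
  positivity

lemma gaussian0_moment_two {v : ℝ≥0} (hv : v ≠ 0) :
    ∫ x, x ^ 2 ∂(gaussianReal 0 v) = v := by
  have hV : (0:ℝ) < v := by positivity
  have hb : (0:ℝ) < (2*(v:ℝ))⁻¹ := by positivity
  rw [integral_pow_gaussian0 hv 2]
  have h := gauss_moment_even hb 1
  simp only [show 2*1 = 2 by norm_num] at h
  rw [h]
  rw [show (2*(1:ℕ)+1 : ℝ)/2 = 3/2 by norm_num]
  have hg : Real.Gamma ((3:ℝ)/2) = (1/2) * √π := by
    rw [show (3:ℝ)/2 = 1/2 + 1 by norm_num, Real.Gamma_add_one (by norm_num),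
      Real.Gamma_one_half_eq]
  have hinv : ((2*(v:ℝ))⁻¹)⁻¹ = 2*(v:ℝ) := inv_inv _
  rw [one_div, hinv, hg]
  have hsplit : (2*(v:ℝ)) ^ ((3:ℝ)/2) = (2*(v:ℝ)) * √(2*(v:ℝ)) := by
    rw [show (3:ℝ)/2 = 1 + 1/2 by norm_num, rpow_add (by positivity), rpow_one,
      ← Real.sqrt_eq_rpow]
  rw [hsplit]
  have hs : √(2 * π * v) = √π * √(2*(v:ℝ)) := by
    rw [← Real.sqrt_mul pi_pos.le]
    congr 1
    ring
  rw [hs]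
  have h1 : √π ≠ 0 := by positivity
  have h2 : √(2*(v:ℝ)) ≠ 0 := by positivity
  field_simp

lemma gaussian0_moment_four {v : ℝ≥0} (hv : v ≠ 0) :
    ∫ x, x ^ 4 ∂(gaussianReal 0 v) = 3 * (v:ℝ)^2 := by
  have hV : (0:ℝ) < v := by positivity
  have hb : (0:ℝ) < (2*(v:ℝ))⁻¹ := by positivity
  rw [integral_pow_gaussian0 hv 4]
  have h := gauss_moment_even hb 2
  simp only [show 2*2 = 4 by norm_num] at h
  rw [h]
  rw [show (2*(2:ℕ)+1 : ℝ)/2 = 5/2 by norm_num]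
  have hg : Real.Gamma ((5:ℝ)/2) = (3/4) * √π := by
    rw [show (5:ℝ)/2 = 3/2 + 1 by norm_num, Real.Gamma_add_one (by norm_num),
      show (3:ℝ)/2 = 1/2 + 1 by norm_num, Real.Gamma_add_one (by norm_num),
      Real.Gamma_one_half_eq]
    ring
  have hinv : ((2*(v:ℝ))⁻¹)⁻¹ = 2*(v:ℝ) := inv_inv _
  rw [one_div, hinv, hg]
  have hsplit : (2*(v:ℝ)) ^ ((5:ℝ)/2) = (2*(v:ℝ))^2 * √(2*(v:ℝ)) := by
    rw [show (5:ℝ)/2 = 2 + 1/2 by norm_num, rpow_add (by positivity),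
      ← Real.sqrt_eq_rpow, rpow_two]
  rw [hsplit]
  have hs : √(2 * π * v) = √π * √(2*(v:ℝ)) := by
    rw [← Real.sqrt_mul pi_pos.le]
    congr 1
    ring
  rw [hs]
  have h1 : √π ≠ 0 := by positivity
  have h2 : √(2*(v:ℝ)) ≠ 0 := by positivity
  field_simp
  ring

lemma gaussianReal_eq_map {μ : ℝ} {v : ℝ≥0} :
    gaussianReal μ v = Measure.map (· + μ) (gaussianReal 0 v) := by
  rw [gaussianReal_map_add_const (μ := 0) (v := v) μ, zero_add]

lemma integrable_pow_gaussian {μ : ℝ} {v : ℝ≥0} (hv : v ≠ 0) (k : ℕ) :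
    Integrable (fun x => x ^ k) (gaussianReal μ v) := by
  rw [gaussianReal_eq_map]
  rw [integrable_map_measure (by fun_prop) (by fun_prop)]
  have : ((fun x : ℝ => x ^ k) ∘ (· + μ)) = fun x : ℝ =>
      ∑ j ∈ Finset.range (k+1), x ^ j * (μ ^ (k - j) * (k.choose j)) := by
    ext x
    simp only [Function.comp_apply, add_pow]
    congr 1
    ext j
    ring
  rw [this]
  exact integrable_finset_sum _ fun j _ => (integrable_pow_gaussian0 hv j).mul_const _

lemma gaussian_moment_two {μ : ℝ} {v : ℝ≥0} (hv : v ≠ 0) :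
    ∫ x, x ^ 2 ∂(gaussianReal μ v) = (v:ℝ) + μ ^ 2 := by
  rw [gaussianReal_eq_map, integral_map (by fun_prop) (by fun_prop)]
  have h : ∀ x : ℝ, ((· + μ) x) ^ 2 = x ^ 2 + (2*μ*x + μ ^ 2) := fun x => by ring
  simp_rw [h]
  have h2 : Integrable (fun x : ℝ => x ^ 2) (gaussianReal 0 v) := integrable_pow_gaussian0 hv 2
  have h1 : Integrable (fun x : ℝ => 2*μ*x) (gaussianReal 0 v) := by
    simpa [pow_one] using (integrable_pow_gaussian0 hv 1).const_mul (2*μ)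
  have h0 : Integrable (fun _ : ℝ => μ ^ 2) (gaussianReal 0 v) := integrable_const _
  have g1 : Integrable (fun x : ℝ => 2*μ*x + μ^2) (gaussianReal 0 v) := h1.add h0
  rw [integral_add h2 g1, integral_add h1 h0, integral_const_mul,
    gaussian0_moment_two hv, gaussian0_moment_one hv, integral_const]
  simp

lemma gaussian_moment_four {μ : ℝ} {v : ℝ≥0} (hv : v ≠ 0) :
    ∫ x, x ^ 4 ∂(gaussianReal μ v)
      = 3 * (v:ℝ)^2 + 6 * μ^2 * v + μ^4 := by
  rw [gaussianReal_eq_map, integral_map (by fun_prop) (by fun_prop)]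
  have h : ∀ x : ℝ, ((· + μ) x) ^ 4
      = x ^ 4 + ((4*μ)*x^3 + ((6*μ^2)*x^2 + ((4*μ^3)*x + μ ^ 4))) := fun x => by ring
  simp_rw [h]
  have h4 : Integrable (fun x : ℝ => x ^ 4) (gaussianReal 0 v) := integrable_pow_gaussian0 hv 4
  have h3 : Integrable (fun x : ℝ => (4*μ)*x^3) (gaussianReal 0 v) :=
    (integrable_pow_gaussian0 hv 3).const_mul _
  have h2 : Integrable (fun x : ℝ => (6*μ^2)*x^2) (gaussianReal 0 v) :=
    (integrable_pow_gaussian0 hv 2).const_mul _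
  have h1 : Integrable (fun x : ℝ => (4*μ^3)*x) (gaussianReal 0 v) := by
    simpa [pow_one] using (integrable_pow_gaussian0 hv 1).const_mul (4*μ^3)
  have h0 : Integrable (fun _ : ℝ => μ ^ 4) (gaussianReal 0 v) := integrable_const _
  have g1 : Integrable (fun x : ℝ => (4*μ^3)*x + μ^4) (gaussianReal 0 v) := h1.add h0
  have g2 : Integrable (fun x : ℝ => (6*μ^2)*x^2 + ((4*μ^3)*x + μ^4)) (gaussianReal 0 v) := h2.add g1
  have g3 : Integrable (fun x : ℝ => (4*μ)*x^3 + ((6*μ^2)*x^2 + ((4*μ^3)*x + μ^4))) (gaussianReal 0 v) := h3.add g2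
  rw [integral_add h4 g3, integral_add h3 g2,
    integral_add h2 g1, integral_add h1 h0, integral_const_mul, integral_const_mul,
    integral_const_mul, gaussian0_moment_four hv, gaussian0_moment_three hv,
    gaussian0_moment_two hv, gaussian0_moment_one hv, integral_const]
  simp
  ring

lemma gaussian_memℒp_sq {μ : ℝ} {v : ℝ≥0} (hv : v ≠ 0) :
    MemLp (fun x : ℝ => x ^ 2) 2 (gaussianReal μ v) := by
  rw [memLp_two_iff_integrable_sq (by fun_prop)]
  exact (integrable_pow_gaussian hv 4).congr (Filter.Eventually.of_forall fun x => by ring)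

section RV
variable {Ω : Type*} [MeasurableSpace Ω] {P : Measure Ω} [IsProbabilityMeasure P]
  {X : Ω → ℝ} {μ : ℝ} {v : ℝ≥0}

lemma aemeasurable_of_map_gaussian (hX : Measure.map X P = gaussianReal μ v) :
    AEMeasurable X P := by
  by_contra h
  rw [Measure.map_of_not_aemeasurable h] at hX
  have := congrArg (fun m : Measure ℝ => m Set.univ) hX
  simp [measure_univ] at this

lemma memℒp_sq_of_map_gaussian (hv : v ≠ 0) (hX : Measure.map X P = gaussianReal μ v) :
    MemLp (fun ω => X ω ^ 2) 2 P := by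
  have hXae := aemeasurable_of_map_gaussian hX
  have := (memLp_map_measure_iff (g := fun x : ℝ => x ^ 2) (f := X)
    (by fun_prop) hXae).1 (by rw [hX]; exact gaussian_memℒp_sq hv)
  exact this

lemma mean_sq_of_map_gaussian (hv : v ≠ 0) (hX : Measure.map X P = gaussianReal μ v) :
    ∫ ω, X ω ^ 2 ∂P = (v:ℝ) + μ ^ 2 := by
  have hXae := aemeasurable_of_map_gaussian hX
  have h1 : ∫ ω, X ω ^ 2 ∂P = ∫ x, x ^ 2 ∂(Measure.map X P) :=
    (integral_map (f := fun x : ℝ => x ^ 2) hXae (by fun_prop)).symm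
  rw [h1, hX, gaussian_moment_two hv]

lemma variance_sq_of_map_gaussian (hv : v ≠ 0) (hX : Measure.map X P = gaussianReal μ v) :
    variance (fun ω => X ω ^ 2) P = 2*(v:ℝ)^2 + 4*μ^2*v := by
  have hXae := aemeasurable_of_map_gaussian hX
  have hmem := memℒp_sq_of_map_gaussian hv hX
  rw [variance_eq_integral (hXae.pow_const 2)]
  set E : ℝ := ∫ ω, X ω ^ 2 ∂P with hE
  have hEval : E = (v:ℝ) + μ ^ 2 := mean_sq_of_map_gaussian hv hX
  have hint : (∫ ω, ((((fun ω => X ω ^ 2) - fun _ => E) ^ (2:ℕ) : Ω → ℝ)) ω ∂P)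
      = ∫ x, (x ^ 2 - E) ^ 2 ∂(Measure.map X P) :=
    (integral_map (f := fun x : ℝ => (x ^ 2 - E) ^ 2) hXae
      (Measurable.aestronglyMeasurable (by measurability))).symm
  change (∫ ω, ((((fun ω => X ω ^ 2) - fun _ => E) ^ (2:ℕ) : Ω → ℝ)) ω ∂P) = _
  rw [hint, hX]
  have h : ∀ x : ℝ, (x ^ 2 - E) ^ 2 = x ^ 4 + ((-(2*E))*x^2 + E^2) := fun x => by ring
  simp_rw [h]
  have h4 : Integrable (fun x : ℝ => x ^ 4) (gaussianReal μ v) := integrable_pow_gaussian hv 4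
  have h2 : Integrable (fun x : ℝ => (-(2*E))*x^2) (gaussianReal μ v) :=
    (integrable_pow_gaussian hv 2).const_mul _
  have h0 : Integrable (fun _ : ℝ => E ^ 2) (gaussianReal μ v) := integrable_const _
  have g1 : Integrable (fun x : ℝ => (-(2*E))*x^2 + E^2) (gaussianReal μ v) := h2.add h0
  rw [integral_add h4 g1, integral_add h2 h0, integral_const_mul,
    gaussian_moment_four hv, gaussian_moment_two hv, integral_const]
  simp only [measure_univ, ENNReal.toReal_one, probReal_univ, smul_eq_mul, one_mul]
  rw [hEval]
  ring

end RV



/-- Proposition 1 of the paper (finite-limit case), in the eigenbasis of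
`S_d = A_d^{-1/2} Σ_d^Z A_d^{-1/2}`: the coordinates of `v d = A_d^{-1/2}(z − μ)_d`
are independent Gaussians with means `m d i` (the coordinates of
`m_d = A_d^{-1/2}(μ^Z − μ)_d`) and variances `α d i` (the eigenvalues of `S_d`).
If `(1/d)‖m_d‖² → L_μ`, `(1/d) trace(S_d) → L_S` and `(1/d) max_i α_i^d → 0`,
then `(1/d)‖A_d^{-1/2}(z − μ)_d‖² → L_μ + L_S` in probability. -/
theorem mahalanobis_tendsto_sum_limits {Ω : Type*} [MeasurableSpace Ω]
    (P : Measure Ω) [IsProbabilityMeasure P]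
    (m : (d : ℕ) → Fin d → ℝ)
    (v : (d : ℕ) → Fin d → Ω → ℝ) (α : (d : ℕ) → Fin d → ℝ≥0)
    (hαpos : ∀ d i, 0 < α d i)
    (hindep : ∀ d, iIndepFun (v d) P)
    (hgauss : ∀ d i, Measure.map (v d i) P = gaussianReal (m d i) (α d i))
    (Lμ LS : ℝ)
    (hm : Tendsto (fun d : ℕ => (∑ i, (m d i) ^ 2) / d) atTop (nhds Lμ))
    (htrace : Tendsto (fun d : ℕ => (∑ i, (α d i : ℝ)) / d) atTop (nhds LS))
    (hmax : Tendsto (fun d : ℕ => ((Finset.univ.sup (α d) : ℝ≥0) : ℝ) / d) atTop (nhds 0)) :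
    TendstoInMeasure P (fun d ω => (∑ i, (v d i ω) ^ 2) / d) atTop (fun _ => Lμ + LS) := by
  classical
  set F : (d : ℕ) → Ω → ℝ := fun d ω => (∑ i, (v d i ω) ^ 2) / d with hF
  -- per-coordinate facts
  have hne : ∀ d (i : Fin d), α d i ≠ 0 := fun d i => (hαpos d i).ne'
  have memi : ∀ d (i : Fin d), MemLp (fun ω => v d i ω ^ 2) 2 P :=
    fun d i => memℒp_sq_of_map_gaussian (hne d i) (hgauss d i)
  have memS : ∀ d, MemLp (fun ω => ∑ i, (v d i ω) ^ 2) 2 P :=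
    fun d => memLp_finsetSum _ (fun i _ => memi d i)
  have memF : ∀ d, MemLp (F d) 2 P := by
    intro d
    have heq : F d = fun ω => ((d:ℝ))⁻¹ * ∑ i, (v d i ω) ^ 2 := by
      funext ω
      simp only [hF]
      rw [div_eq_inv_mul]
    rw [heq]
    exact (memS d).const_mul _
  -- mean of F d
  have hES : ∀ d, ∫ ω, (∑ i, (v d i ω) ^ 2) ∂P = ∑ i, ((α d i : ℝ) + m d i ^ 2) := by
    intro d
    rw [integral_finset_sum _ (fun i _ => (memi d i).integrable one_le_two)]
    exact Finset.sum_congr rfl fun i _ => mean_sq_of_map_gaussian (hne d i) (hgauss d i)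
  have hEF : ∀ d, ∫ ω, F d ω ∂P = (∑ i, ((α d i : ℝ) + m d i ^ 2)) / d := by
    intro d
    simp only [hF]
    rw [integral_div, hES]
  -- variance of F d
  have hVarS : ∀ d, variance (fun ω => ∑ i, (v d i ω) ^ 2) P
      = ∑ i, (2*(α d i : ℝ)^2 + 4*(m d i)^2*(α d i)) := by
    intro d
    have hpair : Set.Pairwise ↑(Finset.univ : Finset (Fin d))
        (fun i j => IndepFun (fun ω => v d i ω ^ 2) (fun ω => v d j ω ^ 2) P) := by
      intro i _ j _ hij
      exact ((hindep d).indepFun hij).comp (measurable_id.pow_const 2)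
        (measurable_id.pow_const 2)
    have h := IndepFun.variance_sum (μ := P) (X := fun i ω => v d i ω ^ 2)
      (s := Finset.univ) (fun i _ => memi d i) hpair
    have hfun : (∑ i : Fin d, fun ω => v d i ω ^ 2) = fun ω => ∑ i, (v d i ω) ^ 2 := by
      ext ω
      simp
    rw [hfun] at h
    rw [h]
    exact Finset.sum_congr rfl fun i _ =>
      variance_sq_of_map_gaussian (hne d i) (hgauss d i)
  have hVarF : ∀ d, variance (F d) P
      = ((d:ℝ)⁻¹)^2 * ∑ i, (2*(α d i : ℝ)^2 + 4*(m d i)^2*(α d i)) := by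
    intro d
    rw [← hVarS d]
    have heq : F d = fun ω => ((d:ℝ))⁻¹ * ∑ i, (v d i ω) ^ 2 := by
      funext ω
      simp only [hF]
      rw [div_eq_inv_mul]
    rw [heq]
    exact variance_const_mul _ _ _
  -- limits of mean and variance
  set e : ℕ → ℝ := fun d => (∑ i, ((α d i : ℝ) + m d i ^ 2)) / d with he_def
  have he : Tendsto e atTop (nhds (LS + Lμ)) := by
    have h := htrace.add hm
    have heq : e = fun d => (∑ i, (α d i : ℝ)) / d + (∑ i, (m d i)^2) / d := by
      funext d
      simp only [he_def]
      rw [← add_div, ← Finset.sum_add_distrib]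
    rw [heq]
    exact h
  set B : ℕ → ℝ := fun d =>
      2 * (((Finset.univ.sup (α d) : ℝ≥0):ℝ) / d) * ((∑ i, (α d i : ℝ)) / d)
      + 4 * (((Finset.univ.sup (α d) : ℝ≥0):ℝ) / d) * ((∑ i, (m d i)^2) / d) with hB_def
  have hB0 : Tendsto B atTop (nhds 0) := by
    have h1 := (hmax.const_mul (2:ℝ)).mul htrace
    have h2 := (hmax.const_mul (4:ℝ)).mul hm
    have h := h1.add h2
    simpa using h
  have hVnonneg : ∀ d, 0 ≤ variance (F d) P := fun d => variance_nonneg _ _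
  have hVle : ∀ d, variance (F d) P ≤ B d := by
    intro d
    rw [hVarF d, hB_def]
    set M := ((Finset.univ.sup (α d) : ℝ≥0) : ℝ) with hM
    have hMi : ∀ i, (α d i : ℝ) ≤ M :=
      fun i => NNReal.coe_le_coe.2 (Finset.le_sup (Finset.mem_univ i))
    have hsum : ∑ i, (2*(α d i : ℝ)^2 + 4*(m d i)^2*(α d i))
        ≤ ∑ i, ((2*M)*(α d i:ℝ) + (4*M)*(m d i)^2) := by
      refine Finset.sum_le_sum (fun i _ => ?_)
      have h0 : (0:ℝ) ≤ α d i := (α d i).coe_nonneg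
      have h1 : (α d i:ℝ)^2 ≤ M * α d i := by nlinarith [hMi i]
      nlinarith [sq_nonneg (m d i), hMi i]
    calc ((d:ℝ)⁻¹)^2 * ∑ i, (2*(α d i : ℝ)^2 + 4*(m d i)^2*(α d i))
        ≤ ((d:ℝ)⁻¹)^2 * ∑ i, ((2*M)*(α d i:ℝ) + (4*M)*(m d i)^2) :=
          mul_le_mul_of_nonneg_left hsum (by positivity)
      _ = 2 * (M / d) * ((∑ i, (α d i : ℝ)) / d) + 4 * (M / d) * ((∑ i, (m d i)^2) / d) := by
          rw [Finset.sum_add_distrib, ← Finset.mul_sum, ← Finset.mul_sum]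
          simp only [div_eq_mul_inv]
          ring
  have hV0 : Tendsto (fun d => variance (F d) P) atTop (nhds 0) :=
    squeeze_zero hVnonneg hVle hB0
  -- conclusion via Chebyshev
  rw [tendstoInMeasure_iff_dist]
  intro ε hε
  have hεhalf : (0:ℝ) < ε/2 := by linarith
  have hee : Tendsto e atTop (nhds (Lμ + LS)) := by rwa [add_comm] at he
  have hev : ∀ᶠ d in atTop, |e d - (Lμ + LS)| ≤ ε/2 := by
    have h := hee.eventually (Metric.ball_mem_nhds (Lμ + LS) hεhalf)
    refine h.mono fun d hd => ?_
    simp only [Metric.mem_ball, Real.dist_eq] at hd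
    exact hd.le
  have hupper : Tendsto (fun d => ENNReal.ofReal (variance (F d) P / (ε/2)^2)) atTop (nhds 0) := by
    have h := ENNReal.tendsto_ofReal (hV0.div_const ((ε/2)^2))
    simpa using h
  refine tendsto_of_tendsto_of_tendsto_of_le_of_le' tendsto_const_nhds hupper
    (Filter.Eventually.of_forall fun d => zero_le) ?_
  refine hev.mono fun d hd => ?_
  have hmean : (∫ ω, F d ω ∂P) = e d := by rw [hEF d]
  have hsub : {ω | ε ≤ dist (F d ω) (Lμ + LS)} ⊆ {ω | ε/2 ≤ |F d ω - ∫ ω, F d ω ∂P|} := by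
    intro ω hω
    rw [Set.mem_setOf_eq, Real.dist_eq] at hω
    rw [Set.mem_setOf_eq, hmean]
    have htri : |F d ω - (Lμ + LS)| ≤ |F d ω - e d| + |e d - (Lμ + LS)| := abs_sub_le _ _ _
    linarith
  exact (measure_mono hsub).trans (meas_ge_le_variance_div_sq (memF d) hεhalf)
end

section
/- With the notation and hypotheses of the previous statement but with L_S = +∞ (i.e., (1/d)trace(S_d) → ∞) and (max_i α_i^d)/(Σ_i α_i^d) → 0, the ratio ‖u_d‖² / trace(S_d) → 1 in probability as d → ∞, where u_d ~ N(0, S_d). -/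
open Filter MeasureTheory ProbabilityTheory
open scoped NNReal
open scoped ENNReal
open Real

lemma myIntegrable_pow_mul_exp (n : ℕ) {b : ℝ} (hb : 0 < b) :
    Integrable (fun x : ℝ => x ^ n * Real.exp (-b * x ^ 2)) := by
  have h := integrable_rpow_mul_exp_neg_mul_sq hb (s := (n : ℝ))
    ((neg_lt_zero.mpr one_pos).trans_le (Nat.cast_nonneg n))
  simpa [Real.rpow_natCast] using h

lemma myTendsto_pow_mul_exp_atTop (n : ℕ) {b : ℝ} (hb : 0 < b) :
    Tendsto (fun x : ℝ => x ^ n * Real.exp (-b * x ^ 2)) atTop (nhds 0) := by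
  have h := rpow_mul_exp_neg_mul_sq_isLittleO_exp_neg hb (n : ℝ)
  simp_rw [Real.rpow_natCast] at h
  refine h.isBigO.trans_tendsto ?_
  rw [Real.tendsto_exp_comp_nhds_zero]
  exact (tendsto_const_mul_atBot_of_neg (by norm_num)).mpr tendsto_id

lemma myTendsto_pow_mul_exp_atBot (n : ℕ) {b : ℝ} (hb : 0 < b) :
    Tendsto (fun x : ℝ => x ^ n * Real.exp (-b * x ^ 2)) atBot (nhds 0) := by
  have h : Tendsto (fun x : ℝ => |x| ^ n * Real.exp (-b * |x| ^ 2)) atBot (nhds 0) :=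
    (myTendsto_pow_mul_exp_atTop n hb).comp tendsto_abs_atBot_atTop
  apply squeeze_zero_norm _ h
  intro x
  simp [abs_mul, abs_of_nonneg (Real.exp_pos _).le, abs_pow, sq_abs, le_refl]

lemma myIntegral_sq_mul_exp {b : ℝ} (hb : 0 < b) :
    ∫ x : ℝ, x ^ 2 * Real.exp (-b * x ^ 2) = Real.sqrt (π / b) / (2 * b) := by
  have hderiv : ∀ x : ℝ, HasDerivAt (fun x : ℝ => x * Real.exp (-b * x ^ 2))
      (Real.exp (-b * x ^ 2) - 2 * b * (x ^ 2 * Real.exp (-b * x ^ 2))) x := by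
    intro x
    have h1 : HasDerivAt (fun x : ℝ => -b * x ^ 2) (-b * (2 * x)) x := by
      simpa using ((hasDerivAt_pow 2 x).const_mul (-b))
    have h2 := (h1.exp)
    have h3 := (hasDerivAt_id x).mul h2
    convert h3 using 1
    · rfl
    · rfl
    · rfl
    simp only [id_eq]
    ring
  have hint : Integrable (fun x : ℝ =>
      Real.exp (-b * x ^ 2) - 2 * b * (x ^ 2 * Real.exp (-b * x ^ 2))) :=
    (integrable_exp_neg_mul_sq hb).sub ((myIntegrable_pow_mul_exp 2 hb).const_mul _)
  have key := integral_of_hasDerivAt_of_tendsto hderiv hint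
    (by simpa using myTendsto_pow_mul_exp_atBot 1 hb)
    (by simpa using myTendsto_pow_mul_exp_atTop 1 hb)
  rw [sub_zero] at key
  rw [integral_sub (integrable_exp_neg_mul_sq hb) ((myIntegrable_pow_mul_exp 2 hb).const_mul _),
    integral_const_mul, integral_gaussian] at key
  have h2b : (2 * b) ≠ 0 := by positivity
  field_simp at key ⊢
  linarith

lemma myIntegral_pow4_mul_exp {b : ℝ} (hb : 0 < b) :
    ∫ x : ℝ, x ^ 4 * Real.exp (-b * x ^ 2) = 3 * Real.sqrt (π / b) / (4 * b ^ 2) := by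
  have hderiv : ∀ x : ℝ, HasDerivAt (fun x : ℝ => x ^ 3 * Real.exp (-b * x ^ 2))
      (3 * (x ^ 2 * Real.exp (-b * x ^ 2)) - 2 * b * (x ^ 4 * Real.exp (-b * x ^ 2))) x := by
    intro x
    have h1 : HasDerivAt (fun x : ℝ => -b * x ^ 2) (-b * (2 * x)) x := by
      simpa using ((hasDerivAt_pow 2 x).const_mul (-b))
    have h3 := (hasDerivAt_pow 3 x).mul h1.exp
    convert h3 using 1
    · rfl
    · rfl
    · rfl
    norm_num
    ring
  have hint : Integrable (fun x : ℝ =>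
      3 * (x ^ 2 * Real.exp (-b * x ^ 2)) - 2 * b * (x ^ 4 * Real.exp (-b * x ^ 2))) :=
    ((myIntegrable_pow_mul_exp 2 hb).const_mul _).sub ((myIntegrable_pow_mul_exp 4 hb).const_mul _)
  have key := integral_of_hasDerivAt_of_tendsto hderiv hint
    (by simpa using myTendsto_pow_mul_exp_atBot 3 hb)
    (by simpa using myTendsto_pow_mul_exp_atTop 3 hb)
  rw [sub_zero] at key
  rw [integral_sub ((myIntegrable_pow_mul_exp 2 hb).const_mul _)
    ((myIntegrable_pow_mul_exp 4 hb).const_mul _),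
    integral_const_mul, integral_const_mul, myIntegral_sq_mul_exp hb] at key
  have h2b : (2 * b) ≠ 0 := by positivity
  field_simp at key ⊢
  linarith

lemma myPdf_eq {v : ℝ≥0} (hv : v ≠ 0) (x : ℝ) :
    gaussianPDFReal 0 v x
      = (Real.sqrt (2 * π * v))⁻¹ * Real.exp (-(2 * (v : ℝ))⁻¹ * x ^ 2) := by
  have h : -(x - 0) ^ 2 / (2 * (v : ℝ)) = -(2 * (v : ℝ))⁻¹ * x ^ 2 := by
    rw [sub_zero]; ring
  rw [gaussianPDFReal, h]

lemma myGaussianPDF_eq (v : ℝ≥0) :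
    gaussianPDF 0 v = fun x => ((gaussianPDFReal 0 v x).toNNReal : ℝ≥0∞) := rfl

lemma myIntegral_gaussianReal {v : ℝ≥0} (hv : v ≠ 0) (g : ℝ → ℝ) :
    ∫ x, g x ∂(gaussianReal 0 v) = ∫ x, gaussianPDFReal 0 v x * g x := by
  rw [gaussianReal_of_var_ne_zero 0 hv, myGaussianPDF_eq,
    integral_withDensity_eq_integral_smul
      ((measurable_gaussianPDFReal 0 v).real_toNNReal) g]
  congr 1
  ext x
  simp [NNReal.smul_def, Real.coe_toNNReal _ (gaussianPDFReal_nonneg 0 v x)]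

lemma myIntegrable_gaussianReal_pow {v : ℝ≥0} (hv : v ≠ 0) (n : ℕ) :
    Integrable (fun x : ℝ => x ^ n) (gaussianReal 0 v) := by
  have hvpos : (0 : ℝ) < v := NNReal.coe_pos.mpr (pos_iff_ne_zero.mpr hv)
  have hb : (0 : ℝ) < (2 * (v : ℝ))⁻¹ := by positivity
  rw [gaussianReal_of_var_ne_zero 0 hv, myGaussianPDF_eq,
    integrable_withDensity_iff_integrable_smul
      ((measurable_gaussianPDFReal 0 v).real_toNNReal)]
  have : (fun x : ℝ => ((gaussianPDFReal 0 v x).toNNReal : ℝ≥0) • (x ^ n))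
      = fun x : ℝ => (Real.sqrt (2 * π * v))⁻¹ * (x ^ n * Real.exp (-(2 * (v:ℝ))⁻¹ * x ^ 2)) := by
    ext x
    simp only [NNReal.smul_def, Real.coe_toNNReal _ (gaussianPDFReal_nonneg 0 v x), smul_eq_mul]
    rw [myPdf_eq hv]
    ring
  rw [this]
  exact (myIntegrable_pow_mul_exp n hb).const_mul _

lemma myMoment2 {v : ℝ≥0} (hv : v ≠ 0) :
    ∫ x, x ^ 2 ∂(gaussianReal 0 v) = (v : ℝ) := by
  have hvpos : (0 : ℝ) < v := NNReal.coe_pos.mpr (pos_iff_ne_zero.mpr hv)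
  have hb : (0 : ℝ) < (2 * (v : ℝ))⁻¹ := by positivity
  rw [myIntegral_gaussianReal hv]
  have h : (fun x : ℝ => gaussianPDFReal 0 v x * x ^ 2)
      = fun x : ℝ => (Real.sqrt (2 * π * v))⁻¹ * (x ^ 2 * Real.exp (-(2 * (v:ℝ))⁻¹ * x ^ 2)) := by
    ext x; rw [myPdf_eq hv]; ring
  rw [h, integral_const_mul, myIntegral_sq_mul_exp hb]
  have hπ : π / ((2 * (v : ℝ))⁻¹) = 2 * π * v := by
    field_simp
  rw [hπ]
  have hs : (0 : ℝ) < Real.sqrt (2 * π * v) := Real.sqrt_pos.mpr (by positivity)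
  field_simp

lemma myMoment4 {v : ℝ≥0} (hv : v ≠ 0) :
    ∫ x, x ^ 4 ∂(gaussianReal 0 v) = 3 * (v : ℝ) ^ 2 := by
  have hvpos : (0 : ℝ) < v := NNReal.coe_pos.mpr (pos_iff_ne_zero.mpr hv)
  have hb : (0 : ℝ) < (2 * (v : ℝ))⁻¹ := by positivity
  rw [myIntegral_gaussianReal hv]
  have h : (fun x : ℝ => gaussianPDFReal 0 v x * x ^ 4)
      = fun x : ℝ => (Real.sqrt (2 * π * v))⁻¹ * (x ^ 4 * Real.exp (-(2 * (v:ℝ))⁻¹ * x ^ 2)) := by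
    ext x; rw [myPdf_eq hv]; ring
  rw [h, integral_const_mul, myIntegral_pow4_mul_exp hb]
  have hπ : π / ((2 * (v : ℝ))⁻¹) = 2 * π * v := by
    field_simp
  rw [hπ]
  have hs : (0 : ℝ) < Real.sqrt (2 * π * v) := Real.sqrt_pos.mpr (by positivity)
  field_simp
  ring

lemma myMemLp_sq {v : ℝ≥0} (hv : v ≠ 0) :
    MemLp (fun x : ℝ => x ^ 2) 2 (gaussianReal 0 v) := by
  rw [memLp_two_iff_integrable_sq (measurable_id'.pow_const 2).aestronglyMeasurable]
  have h := myIntegrable_gaussianReal_pow hv 4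
  have : (fun x : ℝ => (x ^ 2) ^ 2) = fun x : ℝ => x ^ 4 := by
    ext x; ring
  rwa [this]

/-- Infinite-trace case: if `u d ~ N(0, S_d)` (independent coordinates with variances
`α d i` in the eigenbasis), `trace(S_d) = Σ_i α_i^d → ∞` and
`(max_i α_i^d)/(Σ_i α_i^d) → 0`, then `‖u_d‖² / trace(S_d) → 1` in probability. -/
theorem norm_sq_div_trace_tendsto_one {Ω : Type*} [MeasurableSpace Ω]
    (P : Measure Ω) [IsProbabilityMeasure P]
    (u : (d : ℕ) → Fin d → Ω → ℝ) (α : (d : ℕ) → Fin d → ℝ≥0)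
    (hαpos : ∀ d i, 0 < α d i)
    (hindep : ∀ d, iIndepFun (u d) P)
    (hgauss : ∀ d i, Measure.map (u d i) P = gaussianReal 0 (α d i))
    (htrace : Tendsto (fun d : ℕ => ∑ i, (α d i : ℝ)) atTop atTop)
    (hmax : Tendsto (fun d : ℕ =>
        ((Finset.univ.sup (α d) : ℝ≥0) : ℝ) / ∑ i, (α d i : ℝ)) atTop (nhds 0)) :
    TendstoInMeasure P
      (fun d ω => (∑ i, (u d i ω) ^ 2) / ∑ i, (α d i : ℝ)) atTop (fun _ => (1 : ℝ)) := by
  classical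
  have hmeas : ∀ d i, AEMeasurable (u d i) P := by
    intro d i
    by_contra h
    have h0 := Measure.map_of_not_aemeasurable (μ := P) h
    rw [hgauss d i] at h0
    have h1 : (gaussianReal 0 (α d i)) Set.univ = 1 := measure_univ
    rw [h0] at h1
    simp at h1
  have hYmem : ∀ d i, MemLp (fun ω => u d i ω ^ 2) 2 P := by
    intro d i
    have h1 : MemLp (fun x : ℝ => x ^ 2) 2 (gaussianReal 0 (α d i)) :=
      myMemLp_sq (hαpos d i).ne'
    rw [← hgauss d i] at h1
    exact (memLp_map_measure_iff (measurable_id'.pow_const 2).aestronglyMeasurable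
      (hmeas d i)).1 h1
  have hEY : ∀ d i, ∫ ω, u d i ω ^ 2 ∂P = (α d i : ℝ) := by
    intro d i
    rw [← myMoment2 (hαpos d i).ne', ← hgauss d i,
      integral_map (hmeas d i) (measurable_id'.pow_const 2).aestronglyMeasurable]
  have hE4 : ∀ d i, ∫ ω, (u d i ω ^ 2) ^ 2 ∂P = 3 * (α d i : ℝ) ^ 2 := by
    intro d i
    have h : ∀ ω, (u d i ω ^ 2) ^ 2 = u d i ω ^ 4 := fun ω => by ring
    simp_rw [h]
    rw [← myMoment4 (hαpos d i).ne', ← hgauss d i,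
      integral_map (hmeas d i) (measurable_id'.pow_const 4).aestronglyMeasurable]
  have hVarY : ∀ d i, variance (fun ω => u d i ω ^ 2) P = 2 * (α d i : ℝ) ^ 2 := by
    intro d i
    rw [variance_eq_sub (hYmem d i)]
    have h2 : (fun ω => u d i ω ^ 2) ^ 2 = fun ω => (u d i ω ^ 2) ^ 2 := rfl
    rw [h2, hE4 d i, hEY d i]
    ring
  have hsum_eq : ∀ d : ℕ, (∑ i : Fin d, fun ω => u d i ω ^ 2) = fun ω => ∑ i, u d i ω ^ 2 := by
    intro d; ext ω; simp
  have hSmem : ∀ d, MemLp (fun ω => ∑ i, u d i ω ^ 2) 2 P := by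
    intro d
    have := memLp_finset_sum' (μ := P) (p := 2) Finset.univ
      (f := fun i ω => u d i ω ^ 2) (fun i _ => hYmem d i)
    rwa [hsum_eq d] at this
  have hES : ∀ d, ∫ ω, (∑ i, u d i ω ^ 2) ∂P = ∑ i, (α d i : ℝ) := by
    intro d
    rw [integral_finset_sum Finset.univ (fun i _ => (hYmem d i).integrable one_le_two)]
    exact Finset.sum_congr rfl fun i _ => hEY d i
  have hVarS : ∀ d, variance (fun ω => ∑ i, u d i ω ^ 2) P
      = ∑ i, 2 * (α d i : ℝ) ^ 2 := by
    intro d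
    have hpair : Set.Pairwise ↑(Finset.univ : Finset (Fin d))
        (fun i j => IndepFun (fun ω => u d i ω ^ 2) (fun ω => u d j ω ^ 2) P) := by
      intro i _ j _ hij
      have := ((hindep d).indepFun hij).comp
        (measurable_id'.pow_const 2) (measurable_id'.pow_const 2)
      simpa [Function.comp_def] using this
    have := IndepFun.variance_sum (μ := P) (X := fun i ω => u d i ω ^ 2)
      (s := Finset.univ) (fun i _ => hYmem d i) hpair
    rw [hsum_eq d] at this
    rw [this]
    exact Finset.sum_congr rfl fun i _ => hVarY d i
  rw [tendstoInMeasure_iff_dist]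
  intro ε hε
  have hTpos : ∀ᶠ d in atTop, (1 : ℝ) ≤ ∑ i, (α d i : ℝ) := htrace.eventually_ge_atTop 1
  have hbound : ∀ᶠ d in atTop,
      P {ω | ε ≤ dist ((∑ i, u d i ω ^ 2) / ∑ i, (α d i : ℝ)) 1}
        ≤ ENNReal.ofReal ((2 / ε ^ 2) *
          (((Finset.univ.sup (α d) : ℝ≥0) : ℝ) / ∑ i, (α d i : ℝ))) := by
    filter_upwards [hTpos] with d hTd
    set T : ℝ := ∑ i, (α d i : ℝ) with hTdef
    set M : ℝ := ((Finset.univ.sup (α d) : ℝ≥0) : ℝ) with hMdef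
    have hT0 : (0 : ℝ) < T := lt_of_lt_of_le one_pos hTd
    have hset : {ω | ε ≤ dist ((∑ i, u d i ω ^ 2) / T) 1}
        = {ω | ε * T ≤ |(∑ i, u d i ω ^ 2) - ∫ ω', (∑ i, u d i ω' ^ 2) ∂P|} := by
      ext ω
      rw [Set.mem_setOf_eq, Set.mem_setOf_eq, hES d, ← hTdef, Real.dist_eq]
      have h1 : (∑ i, u d i ω ^ 2) / T - 1 = ((∑ i, u d i ω ^ 2) - T) / T := by
        field_simp
      rw [h1, abs_div, abs_of_pos hT0, le_div_iff₀ hT0]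
    rw [hset]
    refine (meas_ge_le_variance_div_sq (hSmem d) (by positivity)).trans ?_
    apply ENNReal.ofReal_le_ofReal
    rw [hVarS d]
    have hM0 : (0 : ℝ) ≤ M := NNReal.coe_nonneg _
    have hsum_le : ∑ i, 2 * (α d i : ℝ) ^ 2 ≤ 2 * M * T := by
      have : ∀ i : Fin d, 2 * (α d i : ℝ) ^ 2 ≤ 2 * M * (α d i : ℝ) := by
        intro i
        have h1 : (α d i : ℝ) ≤ M := by
          exact_mod_cast NNReal.coe_le_coe.mpr (Finset.le_sup (Finset.mem_univ i))
        have h2 : (0 : ℝ) ≤ (α d i : ℝ) := NNReal.coe_nonneg _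
        nlinarith
      calc ∑ i, 2 * (α d i : ℝ) ^ 2 ≤ ∑ i, 2 * M * (α d i : ℝ) :=
            Finset.sum_le_sum fun i _ => this i
        _ = 2 * M * T := by rw [hTdef, Finset.mul_sum]
    calc (∑ i, 2 * (α d i : ℝ) ^ 2) / (ε * T) ^ 2
        ≤ (2 * M * T) / (ε * T) ^ 2 := by gcongr
      _ = (2 / ε ^ 2) * (M / T) := by
          field_simp
  have hg : Tendsto (fun d => ENNReal.ofReal ((2 / ε ^ 2) *
      (((Finset.univ.sup (α d) : ℝ≥0) : ℝ) / ∑ i, (α d i : ℝ)))) atTop (nhds 0) := by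
    have h1 : Tendsto (fun d => (2 / ε ^ 2) *
        (((Finset.univ.sup (α d) : ℝ≥0) : ℝ) / ∑ i, (α d i : ℝ))) atTop (nhds 0) := by
      simpa using hmax.const_mul (2 / ε ^ 2)
    simpa using ENNReal.tendsto_ofReal h1
  exact tendsto_of_tendsto_of_tendsto_of_le_of_le' tendsto_const_nhds hg
    (Eventually.of_forall fun d => zero_le) hbound
end
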